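/- Let M ≥ 1, λ₁ ∈ ℂ, γ : Fin M → ℂ, c₀ ∈ ℂ, c d : Fin M → ℂ, and ε, Ω ∈ ℝ. Define, for ρ ∈ ℝ (indexing i from 1 to M): a(ρ) = Re(λ₁)·ρ + ∑ᵢ Re(γᵢ)·ρ^{2i+1}; b(ρ) = Im(λ₁) + ∑ᵢ Im(γᵢ)·ρ^{2i}; f₁(ρ) = Re(c₀) + ∑ᵢ (Re(cᵢ) + Re(dᵢ))·ρ^{2i}; f₂(ρ) = Im(c₀) + ∑ᵢ (Im(cᵢ) − Im(dᵢ))·ρ^{2i}; g₁(ρ) = Im(c₀) + ∑ᵢ (Im(cᵢ) + Im(dᵢ))·ρ^{2i}; g₂(ρ) = Re(c₀) + ∑ᵢ (Re(cᵢ) − Re(dᵢ))·ρ^{2i}. Let ρ, ψ : ℝ → ℝ be differentiable with ρ(t) > 0 for all t, and set s(t) := ρ(t)·exp(𝕚·(ψ(t) + Ω·t)) : ℝ → ℂ. Then for every t ∈ ℝ, s has derivative λ₁·s(t) + ∑ᵢ γᵢ·s(t)^{i+1}·(conj s(t))^{i} + ε·(c₀·exp(𝕚Ωt) + ∑ᵢ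 (cᵢ·s(t)^{i}·(conj s(t))^{i}·exp(𝕚Ωt) + dᵢ·s(t)^{i+1}·(conj s(t))^{i−1}·exp(−𝕚Ωt))) at t if and only if ρ'(t) = a(ρ(t)) + ε·(f₁(ρ(t))·cos(ψ(t)) + f₂(ρ(t))·sin(ψ(t))) and ψ'(t) = b(ρ(t)) − Ω + (ε/ρ(t))·(g₁(ρ(t))·cos(ψ(t)) − g₂(ρ(t))·sin(ψ(t))). -/

import Mathlib

open Complex

/-- The complex SSM-reduced trajectory `s(t) = ρ(t) e^{i(ψ(t) + Ω t)}` built from the polar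
coordinates `(ρ, ψ)` relative to the forcing phase `Ω t`. -/
noncomputable def ssmTraj (Ω : ℝ) (ρ ψ : ℝ → ℝ) : ℝ → ℂ :=
  fun t => (ρ t : ℂ) * Complex.exp (Complex.I * ((ψ t : ℂ) + (Ω : ℂ) * (t : ℂ)))

/-- `a(ρ) = Re(λ₁)ρ + ∑_{i=1}^M Re(γ_i) ρ^{2i+1}` (index `i : Fin M` encodes `i+1`). -/
noncomputable def aFun (M : ℕ) (lam1 : ℂ) (γ : Fin M → ℂ) (ρ : ℝ) : ℝ :=
  lam1.re * ρ + ∑ i : Fin M, (γ i).re * ρ ^ (2 * ((i : ℕ) + 1) + 1)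

/-- `b(ρ) = Im(λ₁) + ∑_{i=1}^M Im(γ_i) ρ^{2i}`. -/
noncomputable def bFun (M : ℕ) (lam1 : ℂ) (γ : Fin M → ℂ) (ρ : ℝ) : ℝ :=
  lam1.im + ∑ i : Fin M, (γ i).im * ρ ^ (2 * ((i : ℕ) + 1))

/-- `f₁(ρ) = Re(c₀) + ∑_{i=1}^M (Re(c_i) + Re(d_i)) ρ^{2i}`. -/
noncomputable def f1Fun (M : ℕ) (c0 : ℂ) (c d : Fin M → ℂ) (ρ : ℝ) : ℝ :=
  c0.re + ∑ i : Fin M, ((c i).re + (d i).re) * ρ ^ (2 * ((i : ℕ) + 1))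

/-- `f₂(ρ) = Im(c₀) + ∑_{i=1}^M (Im(c_i) − Im(d_i)) ρ^{2i}`. -/
noncomputable def f2Fun (M : ℕ) (c0 : ℂ) (c d : Fin M → ℂ) (ρ : ℝ) : ℝ :=
  c0.im + ∑ i : Fin M, ((c i).im - (d i).im) * ρ ^ (2 * ((i : ℕ) + 1))

/-- `g₁(ρ) = Im(c₀) + ∑_{i=1}^M (Im(c_i) + Im(d_i)) ρ^{2i}`. -/
noncomputable def g1Fun (M : ℕ) (c0 : ℂ) (c d : Fin M → ℂ) (ρ : ℝ) : ℝ :=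
  c0.im + ∑ i : Fin M, ((c i).im + (d i).im) * ρ ^ (2 * ((i : ℕ) + 1))

/-- `g₂(ρ) = Re(c₀) + ∑_{i=1}^M (Re(c_i) − Re(d_i)) ρ^{2i}`. -/
noncomputable def g2Fun (M : ℕ) (c0 : ℂ) (c d : Fin M → ℂ) (ρ : ℝ) : ℝ :=
  c0.re + ∑ i : Fin M, ((c i).re - (d i).re) * ρ ^ (2 * ((i : ℕ) + 1))

lemma pcA (R : ℝ) (θ : ℂ) (n : ℕ) :
    ((R:ℂ) * Complex.exp θ) ^ (n+2) * ((R:ℂ) * Complex.exp (-θ)) ^ (n+1)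
      = (R:ℂ) ^ (2*(n+1)+1) * Complex.exp θ := by
  rw [mul_pow, mul_pow, ← Complex.exp_nat_mul, ← Complex.exp_nat_mul,
    mul_mul_mul_comm, ← pow_add, ← Complex.exp_add]
  congr 1
  · congr 1; ring
  · push_cast; ring

lemma pcB (R : ℝ) (θ : ℂ) (n : ℕ) :
    ((R:ℂ) * Complex.exp θ) ^ (n+1) * ((R:ℂ) * Complex.exp (-θ)) ^ (n+1)
      = (R:ℂ) ^ (2*(n+1)) := by
  rw [mul_pow, mul_pow, ← Complex.exp_nat_mul, ← Complex.exp_nat_mul,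
    mul_mul_mul_comm, ← pow_add, ← Complex.exp_add]
  rw [show ((((n:ℕ)+1 : ℕ)):ℂ) * θ + ((((n:ℕ)+1 : ℕ)):ℂ) * (-θ) = 0 by push_cast; ring,
    Complex.exp_zero, mul_one]
  congr 1; ring

lemma pcC (R : ℝ) (θ : ℂ) (n : ℕ) :
    ((R:ℂ) * Complex.exp θ) ^ (n+2) * ((R:ℂ) * Complex.exp (-θ)) ^ n
      = (R:ℂ) ^ (2*(n+1)) * (Complex.exp θ * Complex.exp θ) := by
  rw [mul_pow, mul_pow, ← Complex.exp_nat_mul, ← Complex.exp_nat_mul,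
    mul_mul_mul_comm, ← pow_add, ← Complex.exp_add, ← Complex.exp_add]
  congr 1
  · congr 1; ring
  · push_cast; ring

lemma expcos (x : ℝ) : Complex.exp (Complex.I * (x:ℂ)) = (Real.cos x : ℂ) + (Real.sin x : ℂ) * Complex.I := by
  rw [mul_comm, Complex.exp_mul_I, ← Complex.ofReal_cos, ← Complex.ofReal_sin]

lemma expcos' (x : ℝ) : Complex.exp (-(Complex.I * (x:ℂ))) = (Real.cos x : ℂ) - (Real.sin x : ℂ) * Complex.I := by
  rw [show -(Complex.I * (x:ℂ)) = ((-x : ℝ) : ℂ) * Complex.I by push_cast; ring,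
    Complex.exp_mul_I, ← Complex.ofReal_cos, ← Complex.ofReal_sin, Real.cos_neg, Real.sin_neg]
  push_cast; ring

/-- The complex SSM-reduced dynamics in the coordinate `s₁` with forcing phase `φ = Ωt` is
equivalent to its real form in the polar coordinates `(ρ, ψ)`. -/
theorem reduced_dynamics_polar_form
    (M : ℕ) (hM : 1 ≤ M) (lam1 : ℂ) (γ : Fin M → ℂ) (c0 : ℂ) (c d : Fin M → ℂ)
    (ε Ω : ℝ) (ρ ψ : ℝ → ℝ)
    (hρ : Differentiable ℝ ρ) (hψ : Differentiable ℝ ψ)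
    (hρpos : ∀ t, 0 < ρ t) (t : ℝ) :
    (HasDerivAt (ssmTraj Ω ρ ψ)
      (lam1 * ssmTraj Ω ρ ψ t
        + ∑ i : Fin M, γ i * ssmTraj Ω ρ ψ t ^ (((i : ℕ) + 1) + 1)
            * (starRingEnd ℂ) (ssmTraj Ω ρ ψ t) ^ ((i : ℕ) + 1)
        + (ε : ℂ) * (c0 * Complex.exp (Complex.I * (Ω : ℂ) * (t : ℂ))
            + ∑ i : Fin M,
              (c i * ssmTraj Ω ρ ψ t ^ ((i : ℕ) + 1)
                  * (starRingEnd ℂ) (ssmTraj Ω ρ ψ t) ^ ((i : ℕ) + 1)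
                  * Complex.exp (Complex.I * (Ω : ℂ) * (t : ℂ))
               + d i * ssmTraj Ω ρ ψ t ^ (((i : ℕ) + 1) + 1)
                  * (starRingEnd ℂ) (ssmTraj Ω ρ ψ t) ^ (((i : ℕ) + 1) - 1)
                  * Complex.exp (-(Complex.I * (Ω : ℂ) * (t : ℂ)))))) t)
    ↔
    (deriv ρ t = aFun M lam1 γ (ρ t)
        + ε * (f1Fun M c0 c d (ρ t) * Real.cos (ψ t) + f2Fun M c0 c d (ρ t) * Real.sin (ψ t))
     ∧ deriv ψ t = (bFun M lam1 γ (ρ t) - Ω)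
        + (ε / ρ t) * (g1Fun M c0 c d (ρ t) * Real.cos (ψ t)
            - g2Fun M c0 c d (ρ t) * Real.sin (ψ t))) := by
  have hRpos : 0 < ρ t := hρpos t
  have hRne : ρ t ≠ 0 := hRpos.ne'
  set R := ρ t with hRdef
  set Ψ := ψ t with hΨdef
  set R' := deriv ρ t with hR'def
  set Ψ' := deriv ψ t with hΨ'def
  set θ : ℂ := Complex.I * ((Ψ : ℂ) + (Ω : ℂ) * (t : ℂ)) with hθdef
  set E : ℂ := Complex.exp θ with hEdef
  -- derivative of the trajectory
  have hD : HasDerivAt (ssmTraj Ω ρ ψ)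
      ((R' : ℂ) * E + (R : ℂ) * (Complex.I * ((Ψ' : ℂ) + (Ω : ℂ)) * E)) t := by
    have h1 : HasDerivAt (fun x : ℝ => ((ρ x : ℂ))) (R' : ℂ) t :=
      (hρ t).hasDerivAt.ofReal_comp
    have h2 : HasDerivAt (fun x : ℝ => ((ψ x : ℂ) + (Ω : ℂ) * (x : ℂ)))
        ((Ψ' : ℂ) + (Ω : ℂ)) t := by
      have ha := (hψ t).hasDerivAt.ofReal_comp
      have hb : HasDerivAt (fun x : ℝ => (Ω : ℂ) * (x : ℂ)) (Ω : ℂ) t := by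
        simpa using ((hasDerivAt_id t).ofReal_comp.const_mul (Ω : ℂ))
      exact ha.add hb
    have h3 := (h2.const_mul Complex.I).cexp
    refine HasDerivAt.congr_deriv
      (f := fun x : ℝ => (ρ x : ℂ) * Complex.exp (Complex.I * ((ψ x : ℂ) + (Ω : ℂ) * (x : ℂ))))
      (h1.mul h3) ?_
    simp only [hEdef, hθdef, hRdef, hΨdef]
    ring
  have hiff : ∀ v : ℂ, HasDerivAt (ssmTraj Ω ρ ψ) v t ↔
      v = (R' : ℂ) * E + (R : ℂ) * (Complex.I * ((Ψ' : ℂ) + (Ω : ℂ)) * E) :=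
    fun v => ⟨fun h => h.unique hD, fun h => h ▸ hD⟩
  rw [hiff]
  -- basic facts about s, conj s, and the forcing exponentials
  have hs : ssmTraj Ω ρ ψ t = (R : ℂ) * E := rfl
  have hconjθ : (starRingEnd ℂ) θ = -θ := by
    simp [hθdef, map_mul, map_add, Complex.conj_ofReal]
  have hconj : (starRingEnd ℂ) (ssmTraj Ω ρ ψ t) = (R : ℂ) * Complex.exp (-θ) := by
    rw [hs, map_mul, Complex.conj_ofReal, hEdef, ← Complex.exp_conj, hconjθ]
  have hEinv : E * Complex.exp (-θ) = 1 := by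
    rw [hEdef, ← Complex.exp_add]; simp
  have hF : Complex.exp (Complex.I * (Ω : ℂ) * (t : ℂ))
      = Complex.exp (-(Complex.I * (Ψ : ℂ))) * E := by
    rw [hEdef, ← Complex.exp_add]; congr 1; rw [hθdef]; ring
  have hF' : Complex.exp (-(Complex.I * (Ω : ℂ) * (t : ℂ)))
      = Complex.exp (Complex.I * (Ψ : ℂ)) * Complex.exp (-θ) := by
    rw [← Complex.exp_add]; congr 1; rw [hθdef]; ring
  -- the sums collapse
  have hsum1 : ∑ i : Fin M, γ i * ssmTraj Ω ρ ψ t ^ (((i : ℕ) + 1) + 1)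
      * (starRingEnd ℂ) (ssmTraj Ω ρ ψ t) ^ ((i : ℕ) + 1)
      = (∑ i : Fin M, γ i * (R : ℂ) ^ (2 * ((i : ℕ) + 1) + 1)) * E := by
    rw [Finset.sum_mul]
    refine Finset.sum_congr rfl fun i _ => ?_
    rw [hconj, hs, mul_assoc, show ((i : ℕ) + 1) + 1 = (i : ℕ) + 2 from rfl, pcA]
    ring
  have hsum2 : ∑ i : Fin M,
      (c i * ssmTraj Ω ρ ψ t ^ ((i : ℕ) + 1)
          * (starRingEnd ℂ) (ssmTraj Ω ρ ψ t) ^ ((i : ℕ) + 1)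
          * Complex.exp (Complex.I * (Ω : ℂ) * (t : ℂ))
       + d i * ssmTraj Ω ρ ψ t ^ (((i : ℕ) + 1) + 1)
          * (starRingEnd ℂ) (ssmTraj Ω ρ ψ t) ^ (((i : ℕ) + 1) - 1)
          * Complex.exp (-(Complex.I * (Ω : ℂ) * (t : ℂ))))
      = (∑ i : Fin M, (c i * (R : ℂ) ^ (2 * ((i : ℕ) + 1))
            * Complex.exp (-(Complex.I * (Ψ : ℂ)))
          + d i * (R : ℂ) ^ (2 * ((i : ℕ) + 1))
            * Complex.exp (Complex.I * (Ψ : ℂ)))) * E := by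
    rw [Finset.sum_mul]
    refine Finset.sum_congr rfl fun i _ => ?_
    rw [hconj, hs, hF, hF', Nat.add_sub_cancel, add_mul]
    congr 1
    · rw [show c i * ((R:ℂ)*E) ^ ((i:ℕ)+1) * ((R:ℂ)*Complex.exp (-θ)) ^ ((i:ℕ)+1)
          * (Complex.exp (-(Complex.I * (Ψ:ℂ))) * E)
        = c i * (((R:ℂ)*E) ^ ((i:ℕ)+1) * ((R:ℂ)*Complex.exp (-θ)) ^ ((i:ℕ)+1))
          * (Complex.exp (-(Complex.I * (Ψ:ℂ))) * E) from by ring, hEdef, pcB]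
      ring
    · rw [show (((i : ℕ) + 1) + 1) = (i : ℕ) + 2 from rfl,
        show d i * ((R:ℂ)*E) ^ ((i:ℕ)+2) * ((R:ℂ)*Complex.exp (-θ)) ^ (i:ℕ)
          * (Complex.exp (Complex.I * (Ψ:ℂ)) * Complex.exp (-θ))
        = d i * (((R:ℂ)*E) ^ ((i:ℕ)+2) * ((R:ℂ)*Complex.exp (-θ)) ^ (i:ℕ))
          * (Complex.exp (Complex.I * (Ψ:ℂ)) * Complex.exp (-θ)) from by ring, hEdef, pcC]
      linear_combination (d i * (R:ℂ) ^ (2*((i:ℕ)+1)) * Complex.exp (Complex.I * (Ψ:ℂ)) * Complex.exp θ) * hEinv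
  -- decompositions of the collapsed sums into real and imaginary parts
  have hγ : ∑ i : Fin M, γ i * (R : ℂ) ^ (2 * ((i : ℕ) + 1) + 1)
      = ((∑ i : Fin M, (γ i).re * R ^ (2 * ((i : ℕ) + 1) + 1) : ℝ) : ℂ)
        + ((∑ i : Fin M, (γ i).im * R ^ (2 * ((i : ℕ) + 1) + 1) : ℝ) : ℂ) * Complex.I := by
    push_cast
    rw [Finset.sum_mul, ← Finset.sum_add_distrib]
    refine Finset.sum_congr rfl fun i _ => ?_
    conv_lhs => rw [← Complex.re_add_im (γ i)]
    ring
  have hcd : ∑ i : Fin M, (c i * (R : ℂ) ^ (2 * ((i : ℕ) + 1))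
          * Complex.exp (-(Complex.I * (Ψ : ℂ)))
        + d i * (R : ℂ) ^ (2 * ((i : ℕ) + 1)) * Complex.exp (Complex.I * (Ψ : ℂ)))
      = ((∑ i : Fin M, ((c i).re + (d i).re) * R ^ (2 * ((i : ℕ) + 1)) : ℝ) : ℂ)
          * ((Real.cos Ψ : ℝ) : ℂ)
        + ((∑ i : Fin M, ((c i).im - (d i).im) * R ^ (2 * ((i : ℕ) + 1)) : ℝ) : ℂ)
          * ((Real.sin Ψ : ℝ) : ℂ)
        + (((∑ i : Fin M, ((c i).im + (d i).im) * R ^ (2 * ((i : ℕ) + 1)) : ℝ) : ℂ)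
          * ((Real.cos Ψ : ℝ) : ℂ)
        - ((∑ i : Fin M, ((c i).re - (d i).re) * R ^ (2 * ((i : ℕ) + 1)) : ℝ) : ℂ)
          * ((Real.sin Ψ : ℝ) : ℂ)) * Complex.I := by
    push_cast
    rw [Finset.sum_mul, Finset.sum_mul, Finset.sum_mul, Finset.sum_mul,
      ← Finset.sum_sub_distrib, Finset.sum_mul, ← Finset.sum_add_distrib,
      ← Finset.sum_add_distrib]
    refine Finset.sum_congr rfl fun i _ => ?_
    rw [expcos, expcos']
    conv_lhs => rw [← Complex.re_add_im (c i), ← Complex.re_add_im (d i)]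
    push_cast
    linear_combination (((d i).im - (c i).im : ℂ) * Complex.sin (Ψ : ℂ)
      * (R : ℂ) ^ (2 * ((i : ℕ) + 1))) * Complex.I_sq
  have hlam : lam1 * ((R : ℂ) * E)
      = ((lam1.re : ℂ) + (lam1.im : ℂ) * Complex.I) * ((R : ℂ) * E) := by
    rw [Complex.re_add_im]
  have hc0 : c0 * (Complex.exp (-(Complex.I * (Ψ : ℂ))) * E)
      = ((c0.re : ℂ) + (c0.im : ℂ) * Complex.I)
        * (Complex.exp (-(Complex.I * (Ψ : ℂ))) * E) := by
    rw [Complex.re_add_im]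
  -- the reduced complex vector field equals E * (A + B i)
  have hKey : lam1 * ssmTraj Ω ρ ψ t
        + ∑ i : Fin M, γ i * ssmTraj Ω ρ ψ t ^ (((i : ℕ) + 1) + 1)
            * (starRingEnd ℂ) (ssmTraj Ω ρ ψ t) ^ ((i : ℕ) + 1)
        + (ε : ℂ) * (c0 * Complex.exp (Complex.I * (Ω : ℂ) * (t : ℂ))
            + ∑ i : Fin M,
              (c i * ssmTraj Ω ρ ψ t ^ ((i : ℕ) + 1)
                  * (starRingEnd ℂ) (ssmTraj Ω ρ ψ t) ^ ((i : ℕ) + 1)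
                  * Complex.exp (Complex.I * (Ω : ℂ) * (t : ℂ))
               + d i * ssmTraj Ω ρ ψ t ^ (((i : ℕ) + 1) + 1)
                  * (starRingEnd ℂ) (ssmTraj Ω ρ ψ t) ^ (((i : ℕ) + 1) - 1)
                  * Complex.exp (-(Complex.I * (Ω : ℂ) * (t : ℂ)))))
      = E * (((aFun M lam1 γ R
          + ε * (f1Fun M c0 c d R * Real.cos Ψ + f2Fun M c0 c d R * Real.sin Ψ) : ℝ) : ℂ)
        + ((R * bFun M lam1 γ R
          + ε * (g1Fun M c0 c d R * Real.cos Ψ - g2Fun M c0 c d R * Real.sin Ψ) : ℝ) : ℂ)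
          * Complex.I) := by
    have hbb : (R : ℂ) * ∑ i : Fin M, ((γ i).im : ℂ) * (R : ℂ) ^ (2 * ((i : ℕ) + 1))
        = ∑ i : Fin M, ((γ i).im : ℂ) * (R : ℂ) ^ (2 * ((i : ℕ) + 1) + 1) := by
      rw [Finset.mul_sum]
      exact Finset.sum_congr rfl fun i _ => by ring
    rw [hsum1, hsum2, hs, hF, hγ, hcd, hlam, hc0, expcos']
    simp only [aFun, bFun, f1Fun, f2Fun, g1Fun, g2Fun]
    push_cast
    linear_combination (-((ε : ℂ) * (c0.im : ℂ) * Complex.sin (Ψ : ℂ)) * E) * Complex.I_sq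
      - (Complex.I * E) * hbb
  rw [hKey, show ((R' : ℂ)) * E + (R : ℂ) * (Complex.I * ((Ψ' : ℂ) + (Ω : ℂ)) * E)
      = E * (((R' : ℝ) : ℂ) + ((R * (Ψ' + Ω) : ℝ) : ℂ) * Complex.I) from by push_cast; ring,
    mul_right_inj' (Complex.exp_ne_zero θ)]
  rw [Complex.ext_iff]
  simp only [Complex.add_re, Complex.add_im, Complex.ofReal_re, Complex.ofReal_im,
    Complex.mul_re, Complex.mul_im, Complex.I_re, Complex.I_im, mul_zero, mul_one,
    zero_mul, sub_zero, add_zero, zero_add]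
  constructor
  · rintro ⟨h1, h2⟩
    refine ⟨h1.symm, ?_⟩
    field_simp
    linarith [h2]
  · rintro ⟨h1, h2⟩
    refine ⟨h1.symm, ?_⟩
    rw [h2]
    field_simp
    ring
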